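/- If the update rule P(z_k - z_{k+1}) ∈ F(z_{k+1}) holds with P symmetric positive semidefinite (possibly singular), and the generalized IDS dist²_{P^-}(0, F(z_k) ∩ range(P)) = 0 at iterate k, then 0 ∈ F(z_{k+1}). -/

import Mathlib

open Matrix

/-- Quadratic form `⟨v, G v⟩`. -/
def qf {ι : Type*} [Fintype ι] (G : Matrix ι ι ℝ) (v : ι → ℝ) : ℝ := v ⬝ᵥ G.mulVec v

/-- The range (column space) of a matrix, as a set of vectors. -/
def mrange {ι : Type*} [Fintype ι] (P : Matrix ι ι ℝ) : Set (ι → ℝ) :=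
  {w | ∃ u, w = P.mulVec u}

/-- If the generalized IDS `dist²_{P⁻}(0, F(z_k) ∩ range P)` vanishes at iterate `k`,
then `0 ∈ F(z_{k+1})`. Here `Pm` is the Moore–Penrose pseudo-inverse of the symmetric
positive semidefinite matrix `P`, characterized by the four Penrose identities. -/
theorem stmt17 {d : ℕ} (P Pm : Matrix (Fin d) (Fin d) ℝ)
    (hP : P.PosSemidef)
    (hp1 : P * Pm * P = P) (hp2 : Pm * P * Pm = Pm)
    (hp3 : (P * Pm)ᵀ = P * Pm) (hp4 : (Pm * P)ᵀ = Pm * P)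
    (F : (Fin d → ℝ) → Set (Fin d → ℝ))
    (hmono : ∀ z z' u v, u ∈ F z → v ∈ F z' → 0 ≤ (u - v) ⬝ᵥ (z - z'))
    (z : ℕ → Fin d → ℝ)
    (hstep : ∀ i, P.mulVec (z i - z (i+1)) ∈ F (z (i+1)))
    (k : ℕ) (hne : (F (z k) ∩ mrange P).Nonempty)
    (hIDS : sInf (qf Pm '' (F (z k) ∩ mrange P)) = 0) :
    (0 : Fin d → ℝ) ∈ F (z (k+1)) := by
  set v : Fin d → ℝ := z k - z (k+1) with hv
  have hu : P.mulVec v ∈ F (z (k+1)) := hstep k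
  have hPt : Pᵀ = P := by
    have h : P.IsSymm := by simpa using hP.isHermitian
    exact h.eq
  have hsymm : ∀ x y : Fin d → ℝ, x ⬝ᵥ P.mulVec y = y ⬝ᵥ P.mulVec x := by
    intro x y
    rw [Matrix.dotProduct_mulVec, ← Matrix.mulVec_transpose, hPt, dotProduct_comm]
  have hsymm2 : ∀ x y : Fin d → ℝ, (P.mulVec x) ⬝ᵥ y = x ⬝ᵥ P.mulVec y := by
    intro x y
    rw [dotProduct_comm, hsymm]
  have key : ∀ r ∈ qf Pm '' (F (z k) ∩ mrange P), qf P v ≤ r := by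
    rintro r ⟨w, ⟨hw, s, rfl⟩, rfl⟩
    have h1 : qf P v ≤ (P.mulVec s) ⬝ᵥ v := by
      have hm := hmono (z k) (z (k+1)) _ _ hw hu
      rw [sub_dotProduct] at hm
      have hq : (P.mulVec v) ⬝ᵥ v = qf P v := by rw [qf, dotProduct_comm]
      linarith
    have h2 : qf Pm (P.mulVec s) = qf P s := by
      rw [qf, qf, Matrix.mulVec_mulVec, hsymm2, Matrix.mulVec_mulVec, ← Matrix.mul_assoc, hp1]
    have h3 : (0:ℝ) ≤ qf P (v - s) := by simpa [qf] using hP.dotProduct_mulVec_nonneg (v - s)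
    have hexp : qf P (v - s) = qf P v - 2 * ((P.mulVec s) ⬝ᵥ v) + qf P s := by
      simp only [qf, Matrix.mulVec_sub, dotProduct_sub, sub_dotProduct]
      rw [hsymm2 s v, hsymm v s]
      ring
    rw [h2]
    linarith
  have hlb : qf P v ≤ 0 := by
    rw [← hIDS]
    exact le_csInf (hne.image _) key
  have h0 : qf P v = 0 := le_antisymm hlb (by simpa [qf] using hP.dotProduct_mulVec_nonneg v)
  have hPz : P.mulVec v = 0 := (hP.dotProduct_mulVec_zero_iff v).mp (by simpa [qf] using h0)
  rw [hPz] at hu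
  exact hu
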